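/- For every s ∈ ℝ and every x ∈ ℝ^{2n}: σ(Ψ(s,1)x, ∂ₛΨ(s,1)x) = ∫₀¹ ‖Z_tᵀ J Ψ(s,t) x‖² dt; in particular this quantity is nonnegative. -/

import Mathlib

open Matrix

noncomputable section

lemma aux_swap1 {m' n' : Type*} [Fintype m'] [Fintype n'] (A : Matrix m' n' ℝ)
    (u : n' → ℝ) (v : m' → ℝ) : (A *ᵥ u) ⬝ᵥ v = u ⬝ᵥ (Aᵀ *ᵥ v) := by
  rw [Matrix.dotProduct_mulVec, Matrix.vecMul_transpose]

lemma mixed_partial (f A : ℝ × ℝ → ℝ) (hf : ContDiff ℝ 2 f)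
    (hfa : ∀ p : ℝ × ℝ, HasDerivAt (fun τ => f (p.1, τ)) (A p) p.2)
    (s t : ℝ) :
    HasDerivAt (fun τ => deriv (fun r => f (r, τ)) s)
      (deriv (fun r => A (r, t)) s) t := by
  have hfd : Differentiable ℝ f := hf.differentiable two_ne_zero
  have hF1 : ContDiff ℝ 1 (fderiv ℝ f) := hf.fderiv_right (by norm_num)
  have hline : ∀ τ : ℝ, HasDerivAt (fun r : ℝ => ((r, τ) : ℝ × ℝ)) ((1:ℝ), (0:ℝ)) s :=
    fun τ => (hasDerivAt_id s).prodMk (hasDerivAt_const s τ)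
  have h1 : ∀ τ : ℝ, deriv (fun r => f (r, τ)) s = fderiv ℝ f (s, τ) (1, 0) := fun τ =>
    (((hfd (s, τ)).hasFDerivAt).comp_hasDerivAt s (hline τ)).deriv
  have hA_eq : A = fun p => fderiv ℝ f p (0, 1) := by
    funext p
    have hl : HasDerivAt (fun τ : ℝ => ((p.1, τ) : ℝ × ℝ)) ((0:ℝ), (1:ℝ)) p.2 :=
      (hasDerivAt_const p.2 p.1).prodMk (hasDerivAt_id p.2)
    have h2 : HasDerivAt (fun τ => f (p.1, τ)) (fderiv ℝ f p (0, 1)) p.2 :=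
      ((hfd p).hasFDerivAt).comp_hasDerivAt p.2 hl
    exact (hfa p).unique h2
  have hFd : HasFDerivAt (fderiv ℝ f) (fderiv ℝ (fderiv ℝ f) (s, t)) (s, t) :=
    ((hF1.differentiable one_ne_zero) (s, t)).hasFDerivAt
  have hline' : HasDerivAt (fun τ : ℝ => ((s, τ) : ℝ × ℝ)) ((0:ℝ), (1:ℝ)) t :=
    (hasDerivAt_const t s).prodMk (hasDerivAt_id t)
  have hFt : HasDerivAt (fun τ => fderiv ℝ f (s, τ)) (fderiv ℝ (fderiv ℝ f) (s, t) ((0:ℝ), (1:ℝ))) t :=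
    hFd.comp_hasDerivAt t hline'
  have hmain : HasDerivAt (fun τ => fderiv ℝ f (s, τ) (1, 0))
      (fderiv ℝ (fderiv ℝ f) (s, t) ((0:ℝ), (1:ℝ)) (1, 0)) t := by
    have := hFt.clm_apply (hasDerivAt_const t (((1:ℝ), (0:ℝ)) : ℝ × ℝ))
    simpa using this
  have hsymm : fderiv ℝ (fderiv ℝ f) (s, t) ((0:ℝ), (1:ℝ)) (1, 0)
      = fderiv ℝ (fderiv ℝ f) (s, t) ((1:ℝ), (0:ℝ)) (0, 1) :=
    (hf.contDiffAt.isSymmSndFDerivAt (by norm_num)) _ _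
  have hAder : HasFDerivAt A
      ((ContinuousLinearMap.apply ℝ ℝ (((0:ℝ), (1:ℝ)) : ℝ × ℝ)).comp
        (fderiv ℝ (fderiv ℝ f) (s, t))) (s, t) := by
    rw [hA_eq]
    exact (ContinuousLinearMap.apply ℝ ℝ (((0:ℝ), (1:ℝ)) : ℝ × ℝ)).hasFDerivAt.comp (s, t) hFd
  have h4 : HasDerivAt (fun r => A (r, t))
      (fderiv ℝ (fderiv ℝ f) (s, t) ((1:ℝ), (0:ℝ)) (0, 1)) s := by
    have := hAder.comp_hasDerivAt s (hline t)
    simpa [Function.comp_def] using this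
  have hfin : HasDerivAt (fun τ => deriv (fun r => f (r, τ)) s)
      (fderiv ℝ (fderiv ℝ f) (s, t) ((0:ℝ), (1:ℝ)) (1, 0)) t := by
    simp only [h1]; exact hmain
  rw [h4.deriv, ← hsymm]
  exact hfin

lemma hasDerivAt_mulVecEntry {m' n' : Type*} [Fintype n']
    (M : ℝ → Matrix m' n' ℝ) (M' : Matrix m' n' ℝ) (x : n' → ℝ) (t : ℝ)
    (h : ∀ i j, HasDerivAt (fun τ => M τ i j) (M' i j) t) (i : m') :
    HasDerivAt (fun τ => (M τ *ᵥ x) i) ((M' *ᵥ x) i) t := by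
  simp only [Matrix.mulVec, dotProduct]
  exact HasDerivAt.fun_sum fun j _ => (h i j).mul_const (x j)

lemma hasDerivAt_constMulVec {m' n' : Type*} [Fintype n']
    (A : Matrix m' n' ℝ) (w : ℝ → n' → ℝ) (w' : n' → ℝ) (t : ℝ)
    (h : ∀ j, HasDerivAt (fun τ => w τ j) (w' j) t) (i : m') :
    HasDerivAt (fun τ => (A *ᵥ w τ) i) ((A *ᵥ w') i) t := by
  simp only [Matrix.mulVec, dotProduct]
  exact HasDerivAt.fun_sum fun j _ => (h j).const_mul (A i j)

lemma hasDerivAt_dot {m' : Type*} [Fintype m']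
    (a b : ℝ → m' → ℝ) (a' b' : m' → ℝ) (t : ℝ)
    (ha : ∀ i, HasDerivAt (fun τ => a τ i) (a' i) t)
    (hb : ∀ i, HasDerivAt (fun τ => b τ i) (b' i) t) :
    HasDerivAt (fun τ => a τ ⬝ᵥ b τ) (a' ⬝ᵥ b t + a t ⬝ᵥ b') t := by
  simp only [dotProduct]
  rw [← Finset.sum_add_distrib]
  exact HasDerivAt.fun_sum fun i _ => (ha i).fun_mul (hb i)

theorem statement13 (n k : ℕ)
    (Z : ℝ → Matrix (Fin n ⊕ Fin n) (Fin k) ℝ) (hZ : Continuous Z)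
    (J : Matrix (Fin n ⊕ Fin n) (Fin n ⊕ Fin n) ℝ)
    (hJ : J = Matrix.fromBlocks 0 (-1) 1 0)
    (Ψ : ℝ × ℝ → Matrix (Fin n ⊕ Fin n) (Fin n ⊕ Fin n) ℝ)
    (hC2 : ∀ i j, ContDiff ℝ 2 (fun p : ℝ × ℝ => Ψ p i j))
    (hode : ∀ s t, ∀ i j, HasDerivAt (fun τ => Ψ (s, τ) i j)
      ((s • (Z t * (Z t)ᵀ * J) * Ψ (s, t)) i j) t)
    (hinit : ∀ s, Ψ (s, 0) = 1)
    (Ψs : ℝ → ℝ → Matrix (Fin n ⊕ Fin n) (Fin n ⊕ Fin n) ℝ)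
    (hΨs : ∀ s t, Ψs s t = Matrix.of fun i j => deriv (fun r => Ψ (r, t) i j) s)
    (s : ℝ) (x : (Fin n ⊕ Fin n) → ℝ) :
    ((J *ᵥ (Ψ (s, 1) *ᵥ x)) ⬝ᵥ (Ψs s 1 *ᵥ x)
      = ∫ t in (0:ℝ)..1,
          ((Z t)ᵀ *ᵥ (J *ᵥ (Ψ (s, t) *ᵥ x))) ⬝ᵥ ((Z t)ᵀ *ᵥ (J *ᵥ (Ψ (s, t) *ᵥ x)))) ∧
    0 ≤ (J *ᵥ (Ψ (s, 1) *ᵥ x)) ⬝ᵥ (Ψs s 1 *ᵥ x) := by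
  classical
  set M : ℝ → Matrix (Fin n ⊕ Fin n) (Fin n ⊕ Fin n) ℝ := fun t => Z t * (Z t)ᵀ * J with hM
  -- differentiability of Ψ entries in the first variable
  have hΨdiff : ∀ (i j) (r t : ℝ), DifferentiableAt ℝ (fun r => Ψ (r, t) i j) r := by
    intro i j r t
    have h := ((hC2 i j).differentiable two_ne_zero).differentiableAt (x := (r, t))
    exact h.comp (f := fun r : ℝ => ((r, t) : ℝ × ℝ)) r (differentiableAt_id.prodMk (differentiableAt_const t))
  have hΨs_entry : ∀ (t : ℝ) i j, HasDerivAt (fun r => Ψ (r, t) i j) (Ψs s t i j) s := by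
    intro t i j
    rw [hΨs]
    simpa using (hΨdiff i j s t).hasDerivAt
  -- mixed partial derivatives
  have hmix : ∀ (t : ℝ) i j, HasDerivAt (fun τ => Ψs s τ i j)
      ((M t * Ψ (s, t) + s • (M t * Ψs s t)) i j) t := by
    intro t i j
    have key := mixed_partial (fun p => Ψ p i j)
      (fun p => (p.1 • M p.2 * Ψ p) i j) (hC2 i j)
      (fun p => hode p.1 p.2 i j) s t
    have hAder : HasDerivAt (fun r => (r • M t * Ψ (r, t)) i j)
        ((M t * Ψ (s, t) + s • (M t * Ψs s t)) i j) s := by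
      have h : HasDerivAt (fun r => ∑ l, r * M t i l * Ψ (r, t) l j)
          (∑ l, (1 * M t i l * Ψ (s, t) l j + s * M t i l * Ψs s t l j)) s :=
        HasDerivAt.fun_sum fun l _ =>
          ((hasDerivAt_id s).mul_const (M t i l)).fun_mul (hΨs_entry t l j)
      have heq : (fun r => (r • M t * Ψ (r, t)) i j)
          = fun r => ∑ l, r * M t i l * Ψ (r, t) l j := by
        funext r
        simp [Matrix.mul_apply, Matrix.smul_apply, smul_eq_mul]
      rw [heq]
      convert h using 1
      simp only [Matrix.add_apply, Matrix.smul_apply, Matrix.mul_apply, smul_eq_mul, one_mul]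
      rw [Finset.mul_sum, ← Finset.sum_add_distrib]
      exact Finset.sum_congr rfl fun l _ => by ring
    rw [hAder.deriv] at key
    have hfun : (fun τ => deriv (fun r => Ψ (r, τ) i j) s) = fun τ => Ψs s τ i j := by
      funext τ; rw [hΨs]; simp
    rwa [hfun] at key
  -- derivative of t ↦ Ψ (s, t) entries
  have hΨt : ∀ (t : ℝ) i j, HasDerivAt (fun τ => Ψ (s, τ) i j)
      ((s • M t * Ψ (s, t)) i j) t := fun t i j => hode s t i j
  -- the function g
  set g : ℝ → ℝ := fun τ => (J *ᵥ (Ψ (s, τ) *ᵥ x)) ⬝ᵥ (Ψs s τ *ᵥ x) with hg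
  set φ : ℝ → ℝ := fun t =>
    ((Z t)ᵀ *ᵥ (J *ᵥ (Ψ (s, t) *ᵥ x))) ⬝ᵥ ((Z t)ᵀ *ᵥ (J *ᵥ (Ψ (s, t) *ᵥ x))) with hφ
  -- antisymmetry of J
  have hJT : Jᵀ = -J := by
    rw [hJ]
    simp [Matrix.fromBlocks_transpose, Matrix.fromBlocks_neg]
  have hanti : ∀ u v : (Fin n ⊕ Fin n) → ℝ, (J *ᵥ u) ⬝ᵥ v = -(u ⬝ᵥ (J *ᵥ v)) := by
    intro u v
    rw [aux_swap1, hJT, Matrix.neg_mulVec, dotProduct_neg]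
  -- g has derivative φ
  have hgderiv : ∀ t : ℝ, HasDerivAt g (φ t) t := by
    intro t
    have ha : ∀ i, HasDerivAt (fun τ => (J *ᵥ (Ψ (s, τ) *ᵥ x)) i)
        ((J *ᵥ ((s • M t * Ψ (s, t)) *ᵥ x)) i) t := by
      intro i
      exact hasDerivAt_constMulVec J _ _ t
        (fun l => hasDerivAt_mulVecEntry (fun τ => Ψ (s, τ)) _ x t (hΨt t) l) i
    have hb : ∀ i, HasDerivAt (fun τ => (Ψs s τ *ᵥ x) i)
        (((M t * Ψ (s, t) + s • (M t * Ψs s t)) *ᵥ x) i) t :=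
      fun i => hasDerivAt_mulVecEntry (fun τ => Ψs s τ) _ x t (hmix t) i
    have hd := hasDerivAt_dot _ _ _ _ t ha hb
    convert hd using 1
    -- algebra
    set a : (Fin n ⊕ Fin n) → ℝ := Ψ (s, t) *ᵥ x with haa
    set b : (Fin n ⊕ Fin n) → ℝ := Ψs s t *ᵥ x with hbb
    have e1 : (s • M t * Ψ (s, t)) *ᵥ x = s • (M t *ᵥ a) := by
      rw [haa, Matrix.mulVec_mulVec, smul_mul_assoc, Matrix.smul_mulVec]
    have e2 : (M t * Ψ (s, t) + s • (M t * Ψs s t)) *ᵥ x = M t *ᵥ a + s • (M t *ᵥ b) := by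
      rw [Matrix.add_mulVec, Matrix.smul_mulVec, Matrix.mulVec_mulVec,
        Matrix.mulVec_mulVec]
    rw [e1, e2]
    have eM : ∀ v : (Fin n ⊕ Fin n) → ℝ, M t *ᵥ v = Z t *ᵥ ((Z t)ᵀ *ᵥ (J *ᵥ v)) := by
      intro v
      rw [hM]
      rw [Matrix.mulVec_mulVec, Matrix.mulVec_mulVec]
    set c : Fin k → ℝ := (Z t)ᵀ *ᵥ (J *ᵥ a) with hcc
    set d : Fin k → ℝ := (Z t)ᵀ *ᵥ (J *ᵥ b) with hdd
    have hswap : ∀ w : Fin k → ℝ, (J *ᵥ a) ⬝ᵥ (Z t *ᵥ w) = c ⬝ᵥ w := by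
      intro w
      rw [Matrix.dotProduct_mulVec, ← Matrix.mulVec_transpose, ← hcc]
    have t1 : (J *ᵥ (s • (M t *ᵥ a))) ⬝ᵥ b = s * (-(c ⬝ᵥ d)) := by
      rw [Matrix.mulVec_smul, smul_dotProduct, smul_eq_mul, eM a, ← hcc,
        hanti, aux_swap1, ← hdd]
    have t2 : (J *ᵥ a) ⬝ᵥ (M t *ᵥ a + s • (M t *ᵥ b)) = c ⬝ᵥ c + s * (c ⬝ᵥ d) := by
      rw [dotProduct_add, dotProduct_smul, smul_eq_mul, eM a, eM b,
        ← hcc, ← hdd, hswap c, hswap d]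
    rw [t1, t2]
    simp only [hφ]
    rw [← haa, ← hcc]
    ring
  -- g 0 = 0
  have hΨs0 : Ψs s 0 = 0 := by
    rw [hΨs]
    ext i j
    have : (fun r => Ψ (r, 0) i j) = fun _ => (1 : Matrix (Fin n ⊕ Fin n) (Fin n ⊕ Fin n) ℝ) i j := by
      funext r; rw [hinit]
    simp [this]
  have hg0 : g 0 = 0 := by
    rw [hg]
    simp [hΨs0]
  -- continuity of φ
  have hφc : Continuous φ := by
    have hZe : ∀ i j, Continuous fun t => Z t i j := fun i j =>
      (continuous_apply j).comp ((continuous_apply i).comp hZ)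
    have hΨe : ∀ i j, Continuous fun t : ℝ => Ψ (s, t) i j := fun i j =>
      ((hC2 i j).continuous).comp (continuous_const.prodMk continuous_id)
    rw [hφ]
    simp only [dotProduct, Matrix.mulVec, Matrix.transpose_apply]
    refine continuous_finset_sum _ fun m _ => Continuous.mul ?_ ?_ <;>
    · refine continuous_finset_sum _ fun i _ => Continuous.mul (hZe i m) ?_
      refine continuous_finset_sum _ fun l _ => Continuous.mul continuous_const ?_
      exact continuous_finset_sum _ fun j _ => (hΨe l j).mul continuous_const
  have hint : IntervalIntegrable φ MeasureTheory.volume 0 1 := hφc.intervalIntegrable 0 1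
  have hFTC : ∫ t in (0:ℝ)..1, φ t = g 1 - g 0 :=
    intervalIntegral.integral_eq_sub_of_hasDerivAt (fun t _ => hgderiv t) hint
  have hmaineq : (J *ᵥ (Ψ (s, 1) *ᵥ x)) ⬝ᵥ (Ψs s 1 *ᵥ x)
      = ∫ t in (0:ℝ)..1,
          ((Z t)ᵀ *ᵥ (J *ᵥ (Ψ (s, t) *ᵥ x))) ⬝ᵥ ((Z t)ᵀ *ᵥ (J *ᵥ (Ψ (s, t) *ᵥ x))) := by
    have h5 : ∫ t in (0:ℝ)..1, φ t = g 1 := by rw [hFTC, hg0, sub_zero]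
    simp only [hφ] at h5
    rw [h5]
  refine ⟨hmaineq, ?_⟩
  rw [hmaineq]
  refine intervalIntegral.integral_nonneg (by norm_num) fun t _ => ?_
  simp only [dotProduct]
  exact Finset.sum_nonneg fun i _ => mul_self_nonneg _
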